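/- Let q be a prime power and let B be an (mμ) × (mn) matrix over F_q. If ℒ is the set of ALL bijective F_q-linear maps on F_q^{mn} and L is uniformly distributed on ℒ, then the family of functions { x ↦ BLx : L ∈ ℒ } is a family of two-universal hash functions from F_q^{mn} to im(B); that is, for all x1 ≠ x2 in F_q^{mn}, Pr_L[ BLx1 = BLx2 ] ≤ 1/|im(B)| = q^{−rank(B)}. -/

import Mathlib

open Matrix

lemma exists_GL_mulVec_eq {F : Type*} [Field F] [Fintype F] [DecidableEq F]
    {N : ℕ} {v w : Fin N → F} (hv : v ≠ 0) (hw : w ≠ 0) :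
    ∃ L : GL (Fin N) F, (L : Matrix (Fin N) (Fin N) F).mulVec v = w := by
  classical
  have hvli : LinearIndepOn F id ({v} : Set (Fin N → F)) :=
    LinearIndepOn.singleton hv
  have hwli : LinearIndepOn F id ({w} : Set (Fin N → F)) :=
    LinearIndepOn.singleton hw
  let b1 := Module.Basis.extend hvli
  let b2 := Module.Basis.extend hwli
  haveI : Fintype (hvli.extend (Set.subset_univ _)) := Fintype.ofFinite _
  haveI : Fintype (hwli.extend (Set.subset_univ _)) := Fintype.ofFinite _
  have hcard : Fintype.card (hvli.extend (Set.subset_univ _))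
      = Fintype.card (hwli.extend (Set.subset_univ _)) := by
    rw [← Module.finrank_eq_card_basis b1, ← Module.finrank_eq_card_basis b2]
  let i1 : (hvli.extend (Set.subset_univ _)) := ⟨v, hvli.subset_extend _ rfl⟩
  let i2 : (hwli.extend (Set.subset_univ _)) := ⟨w, hwli.subset_extend _ rfl⟩
  let σ0 := Fintype.equivOfCardEq hcard
  let σ := σ0.trans (Equiv.swap (σ0 i1) i2)
  let e : (Fin N → F) ≃ₗ[F] (Fin N → F) := b1.equiv b2 σ
  have hev : e v = w := by
    have h1 : b1 i1 = v := Module.Basis.extend_apply_self hvli i1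
    have h2 : b2 i2 = w := Module.Basis.extend_apply_self hwli i2
    have := b1.equiv_apply i1 b2 σ
    rw [h1] at this
    rw [show e v = (b1.equiv b2 σ) v from rfl, this]
    have : σ i1 = i2 := by simp [σ, σ0]
    rw [this, h2]
  refine ⟨⟨LinearMap.toMatrix' (e : (Fin N → F) →ₗ[F] (Fin N → F)),
    LinearMap.toMatrix' (e.symm : (Fin N → F) →ₗ[F] (Fin N → F)), ?_, ?_⟩, ?_⟩
  · rw [← LinearMap.toMatrix'_comp, ← LinearMap.toMatrix'_id]
    congr 1
    ext x
    simp
  · rw [← LinearMap.toMatrix'_comp, ← LinearMap.toMatrix'_id]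
    congr 1
    ext x
    simp
  · show (LinearMap.toMatrix' (e : (Fin N → F) →ₗ[F] (Fin N → F))).mulVec v = w
    rw [← Matrix.toLin'_apply, Matrix.toLin'_toMatrix']
    exact hev

theorem full_GL_two_universal {F : Type*} [Field F] [Fintype F] [DecidableEq F]
    (m n μ : ℕ) (hm : 0 < m) (hn : 0 < n) (hμ : 0 < μ)
    (B : Matrix (Fin (m * μ)) (Fin (m * n)) F)
    (x1 x2 : Fin (m * n) → F) (hne : x1 ≠ x2) :
    (({L : GL (Fin (m * n)) F |
        B.mulVec ((L : Matrix (Fin (m * n)) (Fin (m * n)) F).mulVec x1)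
          = B.mulVec ((L : Matrix (Fin (m * n)) (Fin (m * n)) F).mulVec x2)}.ncard : ℝ)
        / (Nat.card (GL (Fin (m * n)) F) : ℝ)
      ≤ 1 / ((Set.range B.mulVec).ncard : ℝ))
    ∧ 1 / ((Set.range B.mulVec).ncard : ℝ)
        = (Fintype.card F : ℝ) ^ (-(B.rank : ℤ)) := by
  classical
  set q := Fintype.card F with hq
  have hq2 : 2 ≤ q := Fintype.one_lt_card
  set v : Fin (m * n) → F := x1 - x2 with hvdef
  have hv : v ≠ 0 := sub_ne_zero.mpr hne
  -- multiplicativity helper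
  have hmul : ∀ (A C : GL (Fin (m * n)) F) (x : Fin (m * n) → F),
      ((A * C : GL (Fin (m * n)) F) : Matrix (Fin (m * n)) (Fin (m * n)) F).mulVec x
        = (A : Matrix (Fin (m * n)) (Fin (m * n)) F).mulVec
            ((C : Matrix (Fin (m * n)) (Fin (m * n)) F).mulVec x) := by
    intro A C x
    rw [Units.val_mul, Matrix.mulVec_mulVec]
  set f : GL (Fin (m * n)) F → (Fin (m * n) → F)
    := fun L => (L : Matrix (Fin (m * n)) (Fin (m * n)) F).mulVec v with hf
  have hfne : ∀ L, f L ≠ 0 := by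
    intro L h0
    apply hv
    have h2 : f (L⁻¹ * L) = ((L⁻¹ : GL (Fin (m*n)) F) : Matrix _ _ F).mulVec (f L) := hmul _ _ _
    have h3 : f (1 : GL (Fin (m * n)) F) = v := by
      show ((1 : GL (Fin (m*n)) F) : Matrix _ _ F).mulVec v = v
      simp
    rw [inv_mul_cancel] at h2
    rw [h3, h0, Matrix.mulVec_zero] at h2
    exact h2
  have hmem : ∀ L : GL (Fin (m * n)) F,
      (B.mulVec ((L : Matrix (Fin (m * n)) (Fin (m * n)) F).mulVec x1)
        = B.mulVec ((L : Matrix (Fin (m * n)) (Fin (m * n)) F).mulVec x2))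
        ↔ B.mulVec (f L) = 0 := by
    intro L
    rw [hf]
    simp only [hvdef, Matrix.mulVec_sub, sub_eq_zero]
  set c := (Finset.univ.filter fun L : GL (Fin (m * n)) F => f L = v).card with hc
  have hfib : ∀ w : Fin (m * n) → F, w ≠ 0 →
      (Finset.univ.filter fun L : GL (Fin (m * n)) F => f L = w).card = c := by
    intro w hw
    obtain ⟨L0, hL0⟩ := exists_GL_mulVec_eq hv hw
    rw [hc]
    apply Finset.card_bij' (fun L _ => L0⁻¹ * L) (fun L _ => L0 * L)
    · intro L hL
      simp only [Finset.mem_filter, Finset.mem_univ, true_and] at hL ⊢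
      show f (L0⁻¹ * L) = v
      have hLw : f L = w := hL
      rw [show f (L0⁻¹ * L) = _ from hmul L0⁻¹ L v]
      rw [show (L : Matrix _ _ F).mulVec v = w from hLw, ← hL0]
      rw [← hmul, inv_mul_cancel]
      simp
    · intro L hL
      simp only [Finset.mem_filter, Finset.mem_univ, true_and] at hL ⊢
      show f (L0 * L) = w
      have hLv : f L = v := hL
      rw [show f (L0 * L) = _ from hmul L0 L v]
      rw [show (L : Matrix _ _ F).mulVec v = v from hLv, hL0]
    · intro L _; group
    · intro L _; group
  have hcpos : 0 < c := by
    rw [hc]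
    refine Finset.card_pos.mpr ⟨1, ?_⟩
    simp only [Finset.mem_filter, Finset.mem_univ, true_and]
    show ((1 : GL (Fin (m*n)) F) : Matrix _ _ F).mulVec v = v
    simp
  have htot : Fintype.card (GL (Fin (m * n)) F) = (q ^ (m * n) - 1) * c := by
    have h1 : (Finset.univ : Finset (GL (Fin (m * n)) F)).card
        = ∑ w ∈ (Finset.univ.filter fun w : Fin (m * n) → F => w ≠ 0),
            ((Finset.univ : Finset (GL (Fin (m * n)) F)).filter fun L => f L = w).card := by
      apply Finset.card_eq_sum_card_fiberwise
      intro L _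
      simp only [Finset.coe_filter, Finset.mem_coe, Finset.mem_filter, Finset.mem_univ, true_and, Set.mem_setOf_eq]
      exact hfne L
    rw [Fintype.card, h1]
    rw [Finset.sum_congr rfl fun w hw => hfib w (by simpa using hw)]
    rw [Finset.sum_const, smul_eq_mul]
    congr 1
    rw [Finset.filter_ne', Finset.card_erase_of_mem (Finset.mem_univ _), Finset.card_univ]
    congr 1
    rw [Module.card_eq_pow_finrank (K := F), Module.finrank_pi, Fintype.card_fin]
  set S := (Finset.univ.filter fun L : GL (Fin (m * n)) F => B.mulVec (f L) = 0) with hS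
  set k := Module.finrank F (LinearMap.ker B.mulVecLin) with hk
  have hrk : B.rank + k = m * n := by
    rw [hk, Matrix.rank]
    rw [LinearMap.finrank_range_add_finrank_ker B.mulVecLin, Module.finrank_pi,
      Fintype.card_fin]
  have hkercard : (Finset.univ.filter fun w : Fin (m * n) → F => B.mulVec w = 0).card
      = q ^ k := by
    have h1 : (Finset.univ.filter fun w : Fin (m * n) → F => B.mulVec w = 0).card
        = Fintype.card {w : Fin (m * n) → F // B.mulVec w = 0} := (Fintype.card_subtype _).symm
    have h2 : Fintype.card {w : Fin (m * n) → F // B.mulVec w = 0}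
        = Fintype.card (LinearMap.ker B.mulVecLin) := by
      apply Fintype.card_congr
      apply Equiv.subtypeEquivRight
      intro x
      simp [LinearMap.mem_ker, Matrix.mulVecLin_apply]
    rw [h1, h2, Module.card_eq_pow_finrank (K := F), hk]
  have hScard : S.card = (q ^ k - 1) * c := by
    have h1 : S.card = ∑ w ∈ (Finset.univ.filter
          fun w : Fin (m * n) → F => B.mulVec w = 0 ∧ w ≠ 0),
        (S.filter fun L => f L = w).card := by
      apply Finset.card_eq_sum_card_fiberwise
      intro L hL
      rw [hS] at hL
      simp only [Finset.coe_filter, Finset.mem_coe, Finset.mem_filter, Finset.mem_univ, true_and, Set.mem_setOf_eq] at hL ⊢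
      exact ⟨hL, hfne L⟩
    have h2 : ∀ w ∈ (Finset.univ.filter
          fun w : Fin (m * n) → F => B.mulVec w = 0 ∧ w ≠ 0),
        (S.filter fun L => f L = w).card = c := by
      intro w hw
      simp only [Finset.mem_filter, Finset.mem_univ, true_and] at hw
      rw [← hfib w hw.2]
      congr 1
      rw [hS, Finset.filter_filter]
      apply Finset.filter_congr
      intro L _
      constructor
      · rintro ⟨_, h⟩; exact h
      · intro h; exact ⟨h ▸ hw.1, h⟩
    rw [h1, Finset.sum_congr rfl h2, Finset.sum_const, smul_eq_mul]
    congr 1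
    have h3 : (Finset.univ.filter fun w : Fin (m * n) → F => B.mulVec w = 0 ∧ w ≠ 0)
        = (Finset.univ.filter fun w : Fin (m * n) → F => B.mulVec w = 0).erase 0 := by
      ext w
      simp only [Finset.mem_filter, Finset.mem_erase, Finset.mem_univ, true_and]
      tauto
    rw [h3, Finset.card_erase_of_mem (by simp), hkercard]
  have hrangecard : (Set.range B.mulVec).ncard = q ^ B.rank := by
    have hset : Set.range B.mulVec
        = (LinearMap.range B.mulVecLin : Set (Fin (m * μ) → F)) := by
      ext y
      simp [LinearMap.mem_range, Matrix.mulVecLin_apply, Set.mem_range]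
    rw [Set.ncard_eq_toFinset_card', Set.toFinset_card, hq]
    rw [show Fintype.card (Set.range B.mulVec)
        = Nat.card (Set.range B.mulVec) from (Nat.card_eq_fintype_card).symm]
    rw [hset]
    rw [show Nat.card (LinearMap.range B.mulVecLin : Set (Fin (m * μ) → F))
        = Nat.card (LinearMap.range B.mulVecLin) from rfl]
    rw [Nat.card_eq_fintype_card, Module.card_eq_pow_finrank (K := F), Matrix.rank]
  have hsetS : {L : GL (Fin (m * n)) F |
      B.mulVec ((L : Matrix (Fin (m * n)) (Fin (m * n)) F).mulVec x1)
        = B.mulVec ((L : Matrix (Fin (m * n)) (Fin (m * n)) F).mulVec x2)} = ↑S := by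
    ext L
    simp only [Set.mem_setOf_eq, hS, Finset.coe_filter, Finset.mem_univ, true_and]
    exact hmem L
  have hcardG : Nat.card (GL (Fin (m * n)) F) = (q ^ (m * n) - 1) * c := by
    rw [Nat.card_eq_fintype_card, htot]
  have hsecond : 1 / ((Set.range B.mulVec).ncard : ℝ)
      = (q : ℝ) ^ (-(B.rank : ℤ)) := by
    rw [hrangecard]
    push_cast
    rw [_root_.zpow_neg, zpow_natCast, one_div]
  refine ⟨?_, hsecond⟩
  rw [hsetS, Set.ncard_coe_finset, hScard, hcardG, hrangecard]
  have hqN : (1 : ℕ) < q ^ (m * n) := by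
    calc (1:ℕ) < 2 := one_lt_two
    _ ≤ q := hq2
    _ ≤ q ^ (m * n) := Nat.le_self_pow (by positivity) q
  have hden : (0 : ℝ) < (((q ^ (m * n) - 1) * c : ℕ) : ℝ) := by
    have : 0 < (q ^ (m * n) - 1) * c := Nat.mul_pos (by omega) hcpos
    exact_mod_cast this
  have hqr : (0 : ℝ) < ((q ^ B.rank : ℕ) : ℝ) := by positivity
  rw [div_le_div_iff₀ hden hqr, one_mul]
  rw [← Nat.cast_mul]
  apply Nat.cast_le.mpr
  calc (q ^ k - 1) * c * q ^ B.rank = (q ^ k - 1) * q ^ B.rank * c := by ring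
    _ ≤ (q ^ (m * n) - 1) * c := by
        apply Nat.mul_le_mul_right
        rw [Nat.sub_mul, one_mul, ← pow_add]
        rw [show k + B.rank = m * n by omega]
        exact Nat.sub_le_sub_left (Nat.one_le_pow _ _ (by omega)) _
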